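/- With J defined by the recursion J(n,k)=0 for k<0 or n<1, J(1,0)=1, and J(n,k) = n² J(n,k-1) + (1/2) \sum_{i=1}^{n-1} \sum_{j=0}^{k} \binom{n+k-2}{i+j-1} i(n-i) J(i,j) J(n-i,k-j) for n ≥ 1, k ≥ 0, we have J(n,1) = n! \sum_{μ=1}^{n} n^{n-μ-1}/(n-μ)! for all n ≥ 1. -/

import Mathlib

open Polynomial Finset

lemma poly_ext {p q : ℚ[X]} (h : derivative p = derivative q) (h0 : p.eval 0 = q.eval 0) : p = q := by
  have h1 : derivative (p - q) = 0 := by rw [derivative_sub, h, sub_self]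
  obtain ⟨c, hc⟩ := Polynomial.natDegree_eq_zero.mp
    (Polynomial.natDegree_eq_zero_of_derivative_eq_zero h1)
  have h2 : (p-q).eval 0 = 0 := by simp [h0]
  rw [← hc] at h2; simp at h2
  have h3 : p - q = 0 := by rw [← hc, h2]; simp
  linear_combination h3

noncomputable def AP : ℕ → ℚ[X]
  | 0 => 1
  | (n+1) => X * (X + C ((n:ℚ)+1)) ^ n

lemma AP_succ (n : ℕ) : AP (n+1) = X * (X + C ((n:ℚ)+1)) ^ n := rfl

lemma AP_zero : AP 0 = 1 := rfl

lemma derivAP : ∀ n : ℕ, derivative (AP (n+1)) = C ((n:ℚ)+1) * (AP n).comp (X + 1)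
  | 0 => by simp [AP]
  | (m+1) => by
    have e1 : ((m+1 : ℕ):ℚ) + 1 = (m:ℚ)+2 := by push_cast; ring
    rw [AP_succ, AP_succ, e1]
    rw [derivative_mul, derivative_pow, derivative_add, derivative_X, derivative_C]
    simp only [mul_comp, X_comp, add_comp, pow_comp, C_comp, C_add, C_1, map_ofNat, one_comp]
    have h2 : (X + 1 + (C (m:ℚ) + 1) : ℚ[X]) = X + (C (m:ℚ) + 2) := by ring
    rw [h2]
    have h3 : (X + (C (m:ℚ) + 2)) ^ (m+1) = (X + (C (m:ℚ)+2)) * (X + (C (m:ℚ)+2)) ^ m := by ring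
    rw [h3]; push_cast
    simp only [C_add, C_1, map_ofNat]
    ring

lemma evalAP0 (n : ℕ) : (AP n).eval 0 = if n = 0 then 1 else 0 := by
  cases n with
  | zero => simp [AP_zero]
  | succ m => simp [AP_succ]

lemma abel_binom : ∀ n : ℕ, ∀ y : ℚ, (AP n).comp (X + C y) =
    ∑ k ∈ range (n+1), C ((n.choose k : ℚ) * (AP (n-k)).eval y) * AP k := by
  intro n
  induction n with
  | zero => intro y; simp [AP_zero]
  | succ m ih =>
    intro y
    apply poly_ext
    · rw [derivative_comp]
      simp only [derivative_add, derivative_X, derivative_C, add_zero, mul_one]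
      rw [derivAP]
      rw [derivative_sum]
      have hR : ∀ k ∈ range (m+2), derivative (C (((m+1).choose k : ℚ) * (AP (m+1-k)).eval y) * AP k)
          = C (((m+1).choose k : ℚ) * (AP (m+1-k)).eval y) * derivative (AP k) := by
        intro k _; rw [derivative_mul, derivative_C]; ring
      rw [sum_congr rfl hR, Finset.sum_range_succ']
      simp only [AP_zero, derivative_one, mul_zero, add_zero]
      have hterm : ∀ k, C (((m+1).choose (k+1) : ℚ) * (AP (m+1-(k+1))).eval y) * derivative (AP (k+1))
          = C ((m:ℚ)+1) * (C ((m.choose k : ℚ) * (AP (m-k)).eval y) * (AP k).comp (X+1)) := by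
        intro k
        simp only [Nat.succ_sub_succ]
        rw [derivAP]
        have : (((m+1).choose (k+1) : ℚ)) * ((k:ℚ)+1) = ((m:ℚ)+1) * (m.choose k : ℚ) := by
          have h := Nat.add_one_mul_choose_eq m k
          have : (((m+1) * m.choose k : ℕ) : ℚ) = (((m+1).choose (k+1) * (k+1) : ℕ) : ℚ) := by
            rw [h]
          push_cast at this
          linarith [this]
        have key : C ((k:ℚ)+1) * C (((m+1).choose (k+1) : ℚ) * (AP (m-k)).eval y)
            = C ((m:ℚ)+1) * C ((m.choose k : ℚ) * (AP (m-k)).eval y) := by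
          rw [← C_mul, ← C_mul]
          congr 1
          linear_combination (AP (m-k)).eval y * this
        linear_combination ((AP k).comp (X+1)) * key
      rw [sum_congr rfl (fun k _ => hterm k), ← Finset.mul_sum]
      rw [show (∑ k ∈ range (m+1), C ((m.choose k : ℚ) * (AP (m-k)).eval y) * (AP k).comp (X+1))
          = (∑ k ∈ range (m+1), C ((m.choose k : ℚ) * (AP (m-k)).eval y) * AP k).comp (X+1) by
        simp [Finset.sum_comp, mul_comp]]
      rw [← ih y]
      simp only [mul_comp, C_comp, Polynomial.comp_assoc, add_comp, X_comp, one_comp]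
      ring_nf
    · simp only [eval_comp, eval_add, eval_X, eval_C, zero_add, eval_finset_sum, eval_mul]
      rw [Finset.sum_eq_single 0]
      · simp [evalAP0, AP_zero]
      · intro k _ hk
        simp [evalAP0, hk]
      · simp

noncomputable def GP (m : ℕ) : ℚ[X] := ∑ t ∈ range (m+1), C ((m.factorial : ℚ)/(t.factorial : ℚ)) * X ^ t

lemma GP_zero : GP 0 = 1 := by simp [GP]

lemma derivGP (m : ℕ) : derivative (GP (m+1)) = C ((m:ℚ)+1) * GP m := by
  rw [GP, derivative_sum]
  have h : ∀ t ∈ range (m+2), derivative (C (((m+1).factorial : ℚ)/(t.factorial : ℚ)) * X ^ t)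
      = C ((((m+1).factorial : ℚ)/(t.factorial : ℚ)) * t) * X ^ (t-1) := by
    intro t _
    rw [derivative_mul, derivative_C, derivative_pow, derivative_X]
    rw [C_mul]; push_cast; ring
  rw [sum_congr rfl h, Finset.sum_range_succ']
  simp only [Nat.cast_zero, mul_zero, C_0, zero_mul, add_zero]
  rw [GP, Finset.mul_sum]
  apply sum_congr rfl
  intro s _
  simp only [Nat.succ_sub_succ, Nat.add_sub_cancel]
  rw [← mul_assoc, ← C_mul]
  congr 2
  have h1 : ((s+1).factorial : ℚ) ≠ 0 := Nat.cast_ne_zero.mpr (Nat.factorial_ne_zero _)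
  have h2 : (s.factorial : ℚ) ≠ 0 := Nat.cast_ne_zero.mpr (Nat.factorial_ne_zero _)
  rw [Nat.factorial_succ m, Nat.factorial_succ s]
  push_cast
  field_simp

lemma GP_def (m : ℕ) : GP m = ∑ t ∈ range (m+1), C ((m.factorial : ℚ)/(t.factorial : ℚ)) * X ^ t := rfl

lemma keyL : ∀ m : ℕ, (GP m).comp (C ((m:ℚ)+1) + X) =
    ∑ k ∈ range (m+1), C ((m.choose k : ℚ) * (GP (m-k)).eval ((m:ℚ)-(k:ℚ)+1)) * AP k := by
  intro m
  induction m with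
  | zero => simp [GP_zero, AP_zero]
  | succ m ih =>
    apply poly_ext
    · rw [derivative_comp]
      simp only [derivative_add, derivative_X, derivative_C, zero_add, mul_one]
      rw [derivGP, derivative_sum]
      have hR : ∀ k ∈ range (m+2),
          derivative (C (((m+1).choose k : ℚ) * (GP (m+1-k)).eval ((m+1:ℕ)-(k:ℚ)+1)) * AP k)
          = C (((m+1).choose k : ℚ) * (GP (m+1-k)).eval ((m+1:ℕ)-(k:ℚ)+1)) * derivative (AP k) := by
        intro k _; rw [derivative_mul, derivative_C]; ring
      rw [sum_congr rfl hR, Finset.sum_range_succ']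
      simp only [AP_zero, derivative_one, mul_zero, add_zero]
      have hterm : ∀ k, C (((m+1).choose (k+1) : ℚ) * (GP (m+1-(k+1))).eval ((m+1:ℕ)-((k+1:ℕ):ℚ)+1)) * derivative (AP (k+1))
          = C ((m:ℚ)+1) * (C ((m.choose k : ℚ) * (GP (m-k)).eval ((m:ℚ)-(k:ℚ)+1)) * (AP k).comp (X+1)) := by
        intro k
        simp only [Nat.succ_sub_succ]
        rw [derivAP]
        have hch : (((m+1).choose (k+1) : ℚ)) * ((k:ℚ)+1) = ((m:ℚ)+1) * (m.choose k : ℚ) := by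
          have h := Nat.add_one_mul_choose_eq m k
          have h2 : (((m+1) * m.choose k : ℕ) : ℚ) = (((m+1).choose (k+1) * (k+1) : ℕ) : ℚ) := by rw [h]
          push_cast at h2
          linarith [h2]
        have hev : ((m+1:ℕ):ℚ)-((k+1:ℕ):ℚ)+1 = (m:ℚ)-(k:ℚ)+1 := by push_cast; ring
        rw [hev]
        have key : C ((k:ℚ)+1) * C (((m+1).choose (k+1) : ℚ) * (GP (m-k)).eval ((m:ℚ)-(k:ℚ)+1))
            = C ((m:ℚ)+1) * C ((m.choose k : ℚ) * (GP (m-k)).eval ((m:ℚ)-(k:ℚ)+1)) := by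
          rw [← C_mul, ← C_mul]
          congr 1
          linear_combination (GP (m-k)).eval ((m:ℚ)-(k:ℚ)+1) * hch
        linear_combination ((AP k).comp (X+1)) * key
      rw [sum_congr rfl (fun k _ => hterm k), ← Finset.mul_sum]
      rw [show (∑ k ∈ range (m+1), C ((m.choose k : ℚ) * (GP (m-k)).eval ((m:ℚ)-(k:ℚ)+1)) * (AP k).comp (X+1))
          = (∑ k ∈ range (m+1), C ((m.choose k : ℚ) * (GP (m-k)).eval ((m:ℚ)-(k:ℚ)+1)) * AP k).comp (X+1) by
        simp [Finset.sum_comp, mul_comp]]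
      rw [← ih, mul_comp, C_comp]
      have hc : ((GP m).comp (C ((m:ℚ)+1)+X)).comp (X+1) = (GP m).comp (C (((m+1:ℕ):ℚ)+1) + X) := by
        rw [Polynomial.comp_assoc]
        congr 1
        simp only [add_comp, X_comp, C_comp]
        push_cast
        simp only [C_add, C_1]
        ring
      rw [hc]; ring
    · simp only [eval_comp, eval_add, eval_X, eval_C, add_zero, eval_finset_sum, eval_mul]
      rw [Finset.sum_eq_single 0]
      · simp [evalAP0, AP_zero]
      · intro k _ hk
        simp [evalAP0, hk]
      · simp

lemma evalAP1 (k : ℕ) : (AP k).eval 1 = ((k:ℚ)+1)^((k:ℤ)-1) := by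
  cases k with
  | zero => simp [AP_zero]
  | succ m =>
    rw [AP_succ]
    rw [show (((m+1:ℕ)):ℤ)-1 = (m:ℤ) by push_cast; ring, zpow_natCast]
    push_cast
    simp [eval_pow]
    ring_nf

lemma evalAP2 (k : ℕ) : (AP k).eval 2 = 2*((k:ℚ)+2)^((k:ℤ)-1) := by
  cases k with
  | zero => simp [AP_zero]
  | succ m =>
    rw [AP_succ]
    rw [show (((m+1:ℕ)):ℤ)-1 = (m:ℤ) by push_cast; ring, zpow_natCast]
    push_cast
    simp [eval_pow]
    ring_nf

lemma abel_scalar (m : ℕ) : 2*((m:ℚ)+2)^((m:ℤ)-1) =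
    ∑ k ∈ range (m+1), (m.choose k : ℚ) * (((k:ℚ)+1)^((k:ℤ)-1)) * ((((m-k:ℕ):ℚ)+1)^(((m-k:ℕ):ℤ)-1)) := by
  have h := congrArg (eval 1) (abel_binom m 1)
  simp only [eval_comp, eval_add, eval_X, eval_C, eval_finset_sum, eval_mul] at h
  rw [show (1:ℚ)+1 = 2 by norm_num] at h
  rw [evalAP2] at h
  rw [h]
  apply sum_congr rfl
  intro k _
  rw [evalAP1, evalAP1]
  ring

lemma keyL_scalar (m : ℕ) : (GP m).eval ((m:ℚ)+2) =
    ∑ k ∈ range (m+1), (m.choose k : ℚ) * (GP (m-k)).eval ((m:ℚ)-(k:ℚ)+1) * (((k:ℚ)+1)^((k:ℤ)-1)) := by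
  have h := congrArg (eval 1) (keyL m)
  simp only [eval_comp, eval_add, eval_X, eval_C, eval_finset_sum, eval_mul] at h
  rw [show (m:ℚ)+1+1 = (m:ℚ)+2 by ring] at h
  rw [h]
  apply sum_congr rfl
  intro k _
  rw [evalAP1]

lemma identityI (n : ℕ) (h : 2 ≤ n) :
    ∑ i ∈ Icc 1 (n-1), ((n-2).choose (i-1) : ℚ) * ((i:ℚ)^((i:ℤ)-2)) * (((n-i:ℕ):ℚ)^(((n-i:ℕ):ℤ)-2))
      = 2 * (n:ℚ)^((n:ℤ)-3) := by
  rw [show Icc 1 (n-1) = Ico 1 n by rw [← Finset.Ico_add_one_right_eq_Icc]; congr 1; omega,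
    Finset.sum_Ico_eq_sum_range]
  have habel := abel_scalar (n-2)
  have hn : ((n-2:ℕ):ℚ) + 2 = (n:ℚ) := by
    have : ((n-2:ℕ):ℚ) = (n:ℚ) - 2 := by
      push_cast [Nat.cast_sub h]; ring
    rw [this]; ring
  have he : ((n-2:ℕ):ℤ) - 1 = (n:ℤ) - 3 := by omega
  rw [hn, he, show n - 2 + 1 = n - 1 by omega] at habel
  rw [habel]
  apply sum_congr rfl
  intro k hk
  simp only [mem_range] at hk
  rw [show 1+k-1 = k by omega, show n-(1+k) = (n-2-k)+1 by omega,
      show ((1+k:ℕ):ℤ)-2 = (k:ℤ)-1 by push_cast; ring,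
      show (((n-2-k)+1:ℕ):ℤ)-2 = ((n-2-k:ℕ):ℤ)-1 by push_cast; ring]
  push_cast
  ring

lemma identityII (n : ℕ) (h : 2 ≤ n) :
    ∑ i ∈ Icc 1 (n-1), ((n-1).choose i : ℚ) * (i:ℚ) * (((n-i:ℕ):ℚ)^(((n-i:ℕ):ℤ)-2)) * (GP (i-1)).eval (i:ℚ)
      = ((n:ℚ)-1) * (GP (n-2)).eval (n:ℚ) := by
  have hkey := keyL_scalar (n-2)
  have hn : ((n-2:ℕ):ℚ) + 2 = (n:ℚ) := by push_cast [Nat.cast_sub h]; ring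
  rw [hn, show n - 2 + 1 = n - 1 by omega] at hkey
  rw [hkey, Finset.mul_sum]
  rw [show Icc 1 (n-1) = Ico 1 n by rw [← Finset.Ico_add_one_right_eq_Icc]; congr 1; omega,
    Finset.sum_Ico_eq_sum_range]
  rw [← Finset.sum_range_reflect]
  apply sum_congr rfl
  intro j hj
  simp only [mem_range] at hj
  rw [show 1 + (n - 1 - 1 - j) = n-1-j by omega]
  have h0 := Nat.add_one_mul_choose_eq (n-2) (n-2-j)
  rw [Nat.choose_symm (show j ≤ n-2 by omega)] at h0
  rw [show n-2+1 = n-1 by omega, show n-2-j+1 = n-1-j by omega] at h0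
  have hcoef : ((n-1).choose (n-1-j) : ℚ) * ((n-1-j:ℕ):ℚ) = ((n:ℚ)-1) * ((n-2).choose j : ℚ) := by
    have hc := congrArg (fun x : ℕ => (x : ℚ)) h0
    push_cast [Nat.cast_sub (show 1 ≤ n by omega)] at hc
    linarith [hc]
  rw [show n-(n-1-j) = j+1 by omega, show n-1-j-1 = n-2-j by omega,
    show ((j+1:ℕ):ℤ)-2 = (j:ℤ)-1 by push_cast; ring,
    show ((n-1-j:ℕ):ℚ) = ((n-2:ℕ):ℚ)-(j:ℚ)+1 by
      push_cast [Nat.cast_sub (show j ≤ n-1 by omega), Nat.cast_sub (show 1 ≤ n by omega),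
        Nat.cast_sub h]; ring]
  push_cast
  push_cast [Nat.cast_sub (show j ≤ n-1 by omega), Nat.cast_sub (show 1 ≤ n by omega)] at hcoef
  rw [show ((n-2:ℕ):ℚ) = (n:ℚ)-2 by push_cast [Nat.cast_sub h]; ring]
  linear_combination (((j:ℚ)+1)^((j:ℤ)-1) * (GP (n-2-j)).eval ((n:ℚ)-2-(j:ℚ)+1)) * hcoef

lemma GPtop (n : ℕ) (h : 2 ≤ n) :
    (GP (n-1)).eval (n:ℚ) = (n:ℚ)^(n-1:ℕ) + ((n:ℚ)-1) * (GP (n-2)).eval (n:ℚ) := by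
  rw [GP_def, GP_def]
  simp only [eval_finset_sum, eval_mul, eval_C, eval_pow, eval_X]
  rw [show n-1+1 = (n-2+1)+1 by omega, Finset.sum_range_succ, show n-2+1 = n-1 by omega]
  rw [div_self (by exact_mod_cast Nat.factorial_ne_zero (n-1)), one_mul]
  rw [Finset.mul_sum]
  rw [add_comm]
  congr 1
  apply sum_congr rfl
  intro t _
  have hfac : ((n-1).factorial : ℚ) = ((n:ℚ)-1) * ((n-2).factorial : ℚ) := by
    rw [show n-1 = (n-2)+1 by omega, Nat.factorial_succ]
    push_cast [Nat.cast_sub h]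
    ring
  rw [hfac]
  ring



/-- `J` satisfies the recursion of Mestre–Oeckl for
`J(n,k) = 2^k (n+k-1)! I(n,k)`. -/
def JRec (J : ℕ → ℤ → ℚ) : Prop :=
  (∀ (n : ℕ) (k : ℤ), k < 0 ∨ n < 1 → J n k = 0) ∧
  J 1 0 = 1 ∧
  ∀ (n k : ℕ), 1 ≤ n → (n, k) ≠ (1, 0) →
    J n k = (n : ℚ) ^ 2 * J n ((k : ℤ) - 1) +
      (1 / 2) * ∑ i ∈ Finset.Icc 1 (n - 1), ∑ j ∈ Finset.range (k + 1),
        ((n + k - 2).choose (i + j - 1) : ℚ) * (i : ℚ) * ((n - i : ℕ) : ℚ) *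
          J i j * J (n - i) ((k : ℤ) - (j : ℤ))

lemma stepA (J : ℕ → ℤ → ℚ) (hJ : JRec J) : ∀ n : ℕ, 1 ≤ n → J n 0 = (n:ℚ)^((n:ℤ)-3) := by
  intro n
  induction n using Nat.strong_induction_on with
  | _ n ih =>
    intro hn
    rcases eq_or_lt_of_le hn with h1 | h1
    · rw [← h1]
      simpa using hJ.2.1
    · have h2 : 2 ≤ n := h1
      have hrec := hJ.2.2 n 0 hn (by simp; omega)
      have hneg : J n (-1) = 0 := hJ.1 n (-1) (Or.inl (by norm_num))
      push_cast at hrec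
      rw [hneg, mul_zero, zero_add] at hrec
      rw [hrec]
      have hsum : ∀ i ∈ Icc 1 (n-1),
          (∑ j ∈ range 1, ((n + 0 - 2).choose (i + j - 1) : ℚ) * (i : ℚ) * ((n - i : ℕ) : ℚ) *
            J i j * J (n - i) ((0:ℤ) - (j : ℤ)))
          = ((n-2).choose (i-1) : ℚ) * ((i:ℚ)^((i:ℤ)-2)) * (((n-i:ℕ):ℚ)^(((n-i:ℕ):ℤ)-2)) := by
        intro i hi
        simp only [mem_Icc] at hi
        rw [Finset.sum_range_one]
        have hi0 : J i ((0:ℕ):ℤ) = (i:ℚ)^((i:ℤ)-3) := by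
          rw [Nat.cast_zero]; exact ih i (by omega) (by omega)
        have hni0 : J (n-i) ((0:ℤ) - ((0:ℕ):ℤ)) = ((n-i:ℕ):ℚ)^(((n-i:ℕ):ℤ)-3) := by
          rw [Nat.cast_zero, sub_zero]; exact ih (n-i) (by omega) (by omega)
        rw [hi0, hni0]
        have hiz : (i:ℚ) ≠ 0 := Nat.cast_ne_zero.mpr (by omega)
        have hniz : ((n-i:ℕ):ℚ) ≠ 0 := Nat.cast_ne_zero.mpr (by omega)
        have e1 : (i:ℚ)^((i:ℤ)-2) = (i:ℚ)^((i:ℤ)-3) * i := by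
          rw [← zpow_add_one₀ hiz]; congr 1; ring
        have e2 : ((n-i:ℕ):ℚ)^(((n-i:ℕ):ℤ)-2) = ((n-i:ℕ):ℚ)^(((n-i:ℕ):ℤ)-3) * ((n-i:ℕ):ℚ) := by
          rw [← zpow_add_one₀ hniz]; congr 1; ring
        rw [e1, e2]
        rw [show n+0-2 = n-2 by omega, show i+0-1 = i-1 by omega]
        ring
      rw [Finset.sum_congr rfl hsum, identityI n h2]
      ring

lemma stepB (J : ℕ → ℤ → ℚ) (hJ : JRec J) : ∀ n : ℕ, 1 ≤ n → J n 1 = (GP (n-1)).eval (n:ℚ) := by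
  intro n
  induction n using Nat.strong_induction_on with
  | _ n ih =>
    intro hn
    have hrec := hJ.2.2 n 1 hn (by simp)
    push_cast at hrec
    rcases eq_or_lt_of_le hn with h1 | h1
    · rw [← h1] at hrec ⊢
      rw [show (1:ℕ)-1 = 0 by rfl] at hrec ⊢
      rw [show Icc 1 0 = (∅ : Finset ℕ) by rfl] at hrec
      simp only [Finset.sum_empty, mul_zero, add_zero] at hrec
      rw [hrec, hJ.2.1, GP_def]
      norm_num
    · have h2 : 2 ≤ n := h1
      have hJ0 := stepA J hJ
      have hnz : (n:ℚ) ≠ 0 := Nat.cast_ne_zero.mpr (by omega)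
      have hsum : ∀ i ∈ Icc 1 (n-1),
          (∑ j ∈ range 2, ((n-1).choose (i+j-1) : ℚ) * (i:ℚ) * ((n-i:ℕ):ℚ) * J i (j:ℤ) * J (n-i) (1 - (j:ℤ)))
          = ((n-1).choose (i-1) : ℚ) * ((i:ℚ)^((i:ℤ)-2)) * ((n-i:ℕ):ℚ) * (GP (n-i-1)).eval ((n-i:ℕ):ℚ)
            + ((n-1).choose i : ℚ) * (i:ℚ) * (((n-i:ℕ):ℚ)^(((n-i:ℕ):ℤ)-2)) * (GP (i-1)).eval (i:ℚ) := by
        intro i hi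
        simp only [mem_Icc] at hi
        rw [Finset.sum_range_succ, Finset.sum_range_one]
        have hJi0 : J i ((0:ℕ):ℤ) = (i:ℚ)^((i:ℤ)-3) := by
          rw [Nat.cast_zero]; exact hJ0 i (by omega)
        have hJni1 : J (n-i) (1 - ((0:ℕ):ℤ)) = (GP (n-i-1)).eval ((n-i:ℕ):ℚ) := by
          rw [Nat.cast_zero, sub_zero]; exact ih (n-i) (by omega) (by omega)
        have hJi1 : J i ((1:ℕ):ℤ) = (GP (i-1)).eval (i:ℚ) := by
          rw [Nat.cast_one]; exact ih i (by omega) (by omega)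
        have hJni0 : J (n-i) (1 - ((1:ℕ):ℤ)) = ((n-i:ℕ):ℚ)^(((n-i:ℕ):ℤ)-3) := by
          rw [Nat.cast_one, sub_self]; exact hJ0 (n-i) (by omega)
        rw [hJi0, hJni1, hJi1, hJni0]
        have hiz : (i:ℚ) ≠ 0 := Nat.cast_ne_zero.mpr (by omega)
        have hniz : ((n-i:ℕ):ℚ) ≠ 0 := Nat.cast_ne_zero.mpr (by omega)
        have e1 : (i:ℚ)^((i:ℤ)-2) = (i:ℚ)^((i:ℤ)-3) * (i:ℚ) := by
          rw [← zpow_add_one₀ hiz]; congr 1; ring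
        have e2 : ((n-i:ℕ):ℚ)^(((n-i:ℕ):ℤ)-2) = ((n-i:ℕ):ℚ)^(((n-i:ℕ):ℤ)-3) * ((n-i:ℕ):ℚ) := by
          rw [← zpow_add_one₀ hniz]; congr 1; ring
        rw [e1, e2, show i+0-1 = i-1 by omega, show i+1-1 = i by omega]
        ring
      rw [hrec, Finset.sum_congr rfl hsum, Finset.sum_add_distrib]
      have hrefl : (∑ i ∈ Icc 1 (n-1), ((n-1).choose (i-1):ℚ) * ((i:ℚ)^((i:ℤ)-2)) * ((n-i:ℕ):ℚ) * (GP (n-i-1)).eval ((n-i:ℕ):ℚ))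
          = ∑ i ∈ Icc 1 (n-1), ((n-1).choose i : ℚ) * (i:ℚ) * (((n-i:ℕ):ℚ)^(((n-i:ℕ):ℤ)-2)) * (GP (i-1)).eval (i:ℚ) := by
        rw [show Icc 1 (n-1) = Ico 1 n by rw [← Finset.Ico_add_one_right_eq_Icc]; congr 1; omega]
        rw [Finset.sum_Ico_eq_sum_range, Finset.sum_Ico_eq_sum_range]
        rw [← Finset.sum_range_reflect]
        apply sum_congr rfl
        intro j hj
        simp only [mem_range] at hj
        rw [show 1 + (n - 1 - 1 - j) = n-1-j by omega]
        rw [show n - (n-1-j) = j+1 by omega, show n-1-j-1 = n-2-j by omega]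
        rw [show (n-1).choose (n-2-j) = (n-1).choose (j+1) by
          rw [← Nat.choose_symm (show j+1 ≤ n-1 by omega)]; congr 1; omega]
        rw [show n - (1+j) = n-1-j by omega, show 1+j-1 = j by omega]
        push_cast
        ring
      rw [hrefl, identityII n h2, hJ0 n hn, GPtop n h2]
      have epow : (n:ℚ)^2 * (n:ℚ)^((n:ℤ)-3) = (n:ℚ)^((n-1:ℕ)) := by
        rw [show (n:ℚ)^((n-1:ℕ)) = (n:ℚ)^(((n-1:ℕ)):ℤ) from (zpow_natCast _ _).symm]
        rw [show (((n-1:ℕ)):ℤ) = ((n:ℤ)-3)+2 by omega, zpow_add₀ hnz]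
        rw [show ((2:ℤ)) = ((2:ℕ):ℤ) by norm_num, zpow_natCast]
        ring
      rw [epow]
      ring

lemma target_eq (n : ℕ) (h : 1 ≤ n) :
    (Nat.factorial n : ℚ) * ∑ μ ∈ Finset.Icc 1 n,
      (n : ℚ) ^ ((n : ℤ) - (μ : ℤ) - 1) / (Nat.factorial (n - μ) : ℚ)
    = (GP (n-1)).eval (n:ℚ) := by
  have hnz : (n:ℚ) ≠ 0 := Nat.cast_ne_zero.mpr (by omega)
  rw [GP_def]
  simp only [eval_finset_sum, eval_mul, eval_C, eval_pow, eval_X]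
  rw [show n-1+1 = n by omega]
  rw [Finset.mul_sum, ← Finset.Ico_add_one_right_eq_Icc, Finset.sum_Ico_eq_sum_range,
    show n+1-1 = n by omega, ← Finset.sum_range_reflect]
  apply sum_congr rfl
  intro k hk
  simp only [mem_range] at hk
  rw [show (n:ℤ) - ((1+(n-1-k):ℕ):ℤ) - 1 = ((k:ℕ):ℤ) - 1 by omega,
    zpow_sub_one₀ hnz, zpow_natCast, show n-(1+(n-1-k)) = k by omega]
  have hfac : (n.factorial : ℚ) = (n:ℚ) * ((n-1).factorial : ℚ) := by
    exact_mod_cast (Nat.mul_factorial_pred (show n ≠ 0 by omega)).symm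
  rw [hfac]
  have hfz : ((k).factorial : ℚ) ≠ 0 := by exact_mod_cast Nat.factorial_ne_zero _
  field_simp

theorem J_n_one (J : ℕ → ℤ → ℚ) (hJ : JRec J) :
    ∀ n : ℕ, 1 ≤ n →
      J n 1 = (Nat.factorial n : ℚ) *
        ∑ μ ∈ Finset.Icc 1 n,
          (n : ℚ) ^ ((n : ℤ) - (μ : ℤ) - 1) / (Nat.factorial (n - μ) : ℚ) := by
  intro n hn
  rw [stepB J hJ n hn]
  exact (target_eq n hn).symm
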